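/- For every positive integer k, ∑_{n=0}^{k} sin(π n² / k) = √(2k) * (1 + (-1)^k)/4. -/

import Mathlib

set_option maxHeartbeats 1000000

open Finset Real Filter Topology

local notation "cexp" => Complex.exp
local notation "I" => Complex.I

lemma theta_bound {z τ : ℂ} (hz : z.im = 0) (hτ : 0 < τ.im) :
    ‖jacobiTheta₂ z τ - 1‖ ≤ 2 * rexp (-π * τ.im) / (1 - rexp (-π * τ.im)) := by
  set q : ℝ := rexp (-π * τ.im) with hq
  have hq0 : 0 < q := Real.exp_pos _
  have hq1 : q < 1 := by
    rw [hq, Real.exp_lt_one_iff]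
    exact mul_neg_of_neg_of_pos (neg_neg_iff_pos.mpr Real.pi_pos) hτ
  have hnorm : ∀ n : ℤ, ‖jacobiTheta₂_term n z τ‖ ≤ q ^ n.natAbs := by
    intro n
    rw [norm_jacobiTheta₂_term, hz, mul_zero, sub_zero, hq, ← Real.exp_nat_mul,
      Real.exp_le_exp]
    have h1 : |(n : ℝ)| ≤ (n : ℝ) ^ 2 := by
      rcases eq_or_ne n 0 with h | h
      · simp [h]
      · have h2 : (1 : ℝ) ≤ |(n : ℝ)| := by
          have := Int.one_le_abs (by simpa using h)
          calc (1:ℝ) ≤ ((|n| : ℤ) : ℝ) := by exact_mod_cast this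
          _ = |(n : ℝ)| := by push_cast; ring
        nlinarith [sq_abs ((n:ℝ))]
    have h3 : (n.natAbs : ℝ) = |(n : ℝ)| := by
      rw [Nat.cast_natAbs]
      exact Int.cast_abs
    rw [h3]
    nlinarith [mul_le_mul_of_nonneg_right h1 (mul_pos Real.pi_pos hτ).le]
  have hsum : Summable (fun n : ℤ ↦ jacobiTheta₂_term n z τ) :=
    (summable_jacobiTheta₂_term_iff z τ).mpr hτ
  have hs1 : Summable (fun n : ℕ ↦ jacobiTheta₂_term ((n : ℤ) + 1) z τ) :=
    hsum.comp_injective (fun a b h ↦ by omega)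
  have hs2 : Summable (fun n : ℕ ↦ jacobiTheta₂_term (-((n : ℤ) + 1)) z τ) :=
    hsum.comp_injective (fun a b h ↦ by omega)
  have hgs : Summable (fun n : ℕ ↦ q ^ (n + 1)) := by
    simpa [pow_succ, mul_comm] using (summable_geometric_of_lt_one hq0.le hq1).mul_left q
  have geo : ∑' n : ℕ, q ^ (n + 1) = q / (1 - q) := by
    calc ∑' n : ℕ, q ^ (n + 1) = ∑' n : ℕ, q * q ^ n := by
          apply tsum_congr; intro n; rw [pow_succ, mul_comm]
    _ = q * ∑' n : ℕ, q ^ n := tsum_mul_left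
    _ = q * (1 - q)⁻¹ := by rw [tsum_geometric_of_lt_one hq0.le hq1]
    _ = q / (1 - q) := (div_eq_mul_inv q (1-q)).symm
  have hbd : ∀ g : ℕ → ℤ, (∀ n, (g n).natAbs = n + 1) →
      ‖∑' n : ℕ, jacobiTheta₂_term (g n) z τ‖ ≤ q / (1 - q) := by
    intro g hg
    have hle : ∀ n : ℕ, ‖jacobiTheta₂_term (g n) z τ‖ ≤ q ^ (n + 1) := by
      intro n; simpa [hg n] using hnorm (g n)
    have hsg : Summable (fun n : ℕ ↦ ‖jacobiTheta₂_term (g n) z τ‖) :=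
      Summable.of_nonneg_of_le (fun _ ↦ norm_nonneg _) hle hgs
    calc ‖∑' n : ℕ, jacobiTheta₂_term (g n) z τ‖ ≤ ∑' n : ℕ, ‖jacobiTheta₂_term (g n) z τ‖ :=
          norm_tsum_le_tsum_norm hsg
    _ ≤ ∑' n : ℕ, q ^ (n + 1) := Summable.tsum_le_tsum hle hsg hgs
    _ = q / (1 - q) := geo
  have hf0 : jacobiTheta₂_term 0 z τ = 1 := by
    simp [jacobiTheta₂_term]
  have htsum : jacobiTheta₂ z τ = (∑' n : ℕ, jacobiTheta₂_term ((n : ℤ) + 1) z τ) + 1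
      + ∑' n : ℕ, jacobiTheta₂_term (-((n : ℤ) + 1)) z τ := by
    have h0 : jacobiTheta₂ z τ = ∑' n : ℤ, jacobiTheta₂_term n z τ := rfl
    rw [h0, tsum_of_add_one_of_neg_add_one (f := fun n : ℤ ↦ jacobiTheta₂_term n z τ) hs1 hs2, hf0]
  calc ‖jacobiTheta₂ z τ - 1‖
      = ‖(∑' n : ℕ, jacobiTheta₂_term ((n : ℤ) + 1) z τ)
        + ∑' n : ℕ, jacobiTheta₂_term (-((n : ℤ) + 1)) z τ‖ := by
        rw [htsum]; congr 1; ring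
  _ ≤ ‖∑' n : ℕ, jacobiTheta₂_term ((n : ℤ) + 1) z τ‖
      + ‖∑' n : ℕ, jacobiTheta₂_term (-((n : ℤ) + 1)) z τ‖ := norm_add_le _ _
  _ ≤ q / (1 - q) + q / (1 - q) := by
      gcongr
      · exact hbd _ (fun n ↦ by omega)
      · exact hbd _ (fun n ↦ by omega)
  _ = 2 * q / (1 - q) := by ring


lemma theta_tendsto_one {ι : Type*} {l : Filter ι} (x σ : ι → ℂ)
    (hx : ∀ i, (x i).im = 0) (hσ : Tendsto (fun i ↦ (σ i).im) l atTop) :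
    Tendsto (fun i ↦ jacobiTheta₂ (x i) (σ i)) l (𝓝 1) := by
  rw [tendsto_iff_norm_sub_tendsto_zero]
  have h1 : Tendsto (fun t : ℝ ↦ rexp (-π * t)) atTop (𝓝 0) := by
    have := Real.tendsto_exp_neg_atTop_nhds_zero.comp
      (tendsto_id.const_mul_atTop Real.pi_pos)
    simpa [Function.comp_def, neg_mul] using this
  have hball : Tendsto (fun t : ℝ ↦ 2 * rexp (-π * t) / (1 - rexp (-π * t))) atTop (𝓝 0) := by
    have h2 : Tendsto (fun t : ℝ ↦ (1:ℝ) - rexp (-π * t)) atTop (𝓝 (1 - 0)) :=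
      tendsto_const_nhds.sub h1
    have := (h1.const_mul 2).div h2 (by norm_num)
    simpa [Pi.div_def] using this
  refine squeeze_zero' (Eventually.of_forall fun i ↦ norm_nonneg _) ?_ (hball.comp hσ)
  filter_upwards [hσ.eventually_gt_atTop 0] with i hi
  exact theta_bound (hx i) hi

lemma cpow_half_mul {ε : ℝ} (hε : 0 < ε) {w : ℂ} (hw : w ≠ 0) :
    ((ε : ℂ) * w) ^ (1/2 : ℂ) = (Real.sqrt ε : ℂ) * w ^ (1/2 : ℂ) := by
  have hε' : (ε : ℂ) ≠ 0 := Complex.ofReal_ne_zero.mpr hε.ne'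
  have hne : (ε : ℂ) * w ≠ 0 := mul_ne_zero hε' hw
  rw [Complex.cpow_def_of_ne_zero hne, Complex.cpow_def_of_ne_zero hw,
    Complex.log_ofReal_mul hε hw, add_mul, Complex.exp_add]
  congr 1
  rw [show Real.sqrt ε = rexp (Real.log ε * (1/2 : ℝ)) by
      rw [Real.sqrt_eq_rpow, Real.rpow_def_of_pos hε], Complex.ofReal_exp]
  push_cast
  ring_nf


noncomputable def τf (m : ℕ) (ε : ℝ) : ℂ := (((2*(m:ℝ))⁻¹ : ℝ) : ℂ) + (ε : ℂ) * I
noncomputable def ρf (m : ℕ) (ε : ℝ) : ℂ := (((4*(m:ℝ)^2*ε)⁻¹ : ℝ) : ℂ) * I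

lemma τf_im (m : ℕ) (ε : ℝ) : (τf m ε).im = ε := by simp [τf]
lemma ρf_im (m : ℕ) (ε : ℝ) : (ρf m ε).im = (4*(m:ℝ)^2*ε)⁻¹ := by
  simp only [ρf, Complex.mul_im, Complex.I_re, Complex.I_im, Complex.ofReal_re,
    Complex.ofReal_im, mul_one, mul_zero, zero_mul, add_zero]

section partA
variable {m : ℕ} (hm : 0 < m) {ε : ℝ} (hε : 0 < ε)

omit hε in
include hm in
lemma termwise (q : ℤ) (r : ℕ) :
    cexp (π * I * ((q * (2*m : ℕ) + r : ℤ) : ℂ)^2 * τf m ε) =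
      cexp (π * I * (r:ℂ)^2 / (2*(m:ℂ))) * cexp (-(π : ℂ) * (r:ℂ)^2 * (ε:ℂ)) *
        jacobiTheta₂_term q (((2*(m:ℝ)*r*ε : ℝ)) * I) (((4*(m:ℝ)^2*ε : ℝ)) * I) := by
  have hm' : ((m:ℂ)) ≠ 0 := Nat.cast_ne_zero.mpr hm.ne'
  rw [jacobiTheta₂_term, ← Complex.exp_add, ← Complex.exp_add,
    Complex.exp_eq_exp_iff_exists_int]
  refine ⟨m * q^2 + q * r, ?_⟩
  rw [τf]
  push_cast
  field_simp
  ring_nf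
  simp only [Complex.I_sq]
  ring

include hm hε in
lemma fiber_eq (r : ℕ) :
    (∑' q : ℤ, cexp (π * I * ((q * (2*m : ℕ) + r : ℤ) : ℂ)^2 * τf m ε)) =
      cexp (π * I * (r:ℂ)^2 / (2*(m:ℂ))) * ((2*(m:ℝ)*Real.sqrt ε : ℝ) : ℂ)⁻¹ *
        jacobiTheta₂ ((r:ℂ)/(2*(m:ℂ))) (ρf m ε) := by
  have hm' : ((m:ℂ)) ≠ 0 := Nat.cast_ne_zero.mpr hm.ne'
  have hσ₀ne : ((4*(m:ℝ)^2*ε : ℝ) : ℂ) * I ≠ 0 := by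
    apply mul_ne_zero _ Complex.I_ne_zero
    rw [Complex.ofReal_ne_zero]
    positivity
  have step1 : (∑' q : ℤ, cexp (π * I * ((q * (2*m : ℕ) + r : ℤ) : ℂ)^2 * τf m ε)) =
      cexp (π * I * (r:ℂ)^2 / (2*(m:ℂ))) * cexp (-(π : ℂ) * (r:ℂ)^2 * (ε:ℂ)) *
        jacobiTheta₂ ((((2*(m:ℝ)*r*ε : ℝ)) : ℂ) * I) ((((4*(m:ℝ)^2*ε : ℝ)) : ℂ) * I) := by
    rw [show jacobiTheta₂ ((((2*(m:ℝ)*r*ε : ℝ)) : ℂ) * I) ((((4*(m:ℝ)^2*ε : ℝ)) : ℂ) * I)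
        = ∑' q : ℤ, jacobiTheta₂_term q ((((2*(m:ℝ)*r*ε : ℝ)) : ℂ) * I)
          ((((4*(m:ℝ)^2*ε : ℝ)) : ℂ) * I) from rfl, ← tsum_mul_left]
    exact tsum_congr fun q ↦ termwise hm q r
  rw [step1, jacobiTheta₂_functional_equation]
  have h1 : -I * ((((4*(m:ℝ)^2*ε : ℝ)) : ℂ) * I) = ((4*(m:ℝ)^2*ε : ℝ) : ℂ) := by
    rw [show -I * ((((4*(m:ℝ)^2*ε : ℝ)) : ℂ) * I) = -(I*I) * ((4*(m:ℝ)^2*ε : ℝ) : ℂ)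
      by ring, Complex.I_mul_I]
    ring
  have h2 : (-I * ((((4*(m:ℝ)^2*ε : ℝ)) : ℂ) * I)) ^ (1/2 : ℂ)
      = ((2*(m:ℝ)*Real.sqrt ε : ℝ) : ℂ) := by
    rw [h1, show ((1/2 : ℂ)) = (((1/2 : ℝ)) : ℂ) by norm_num,
      ← Complex.ofReal_cpow (by positivity) (1/2 : ℝ)]
    congr 1
    rw [← Real.sqrt_eq_rpow, show (4*(m:ℝ)^2*ε) = (2*m)^2*ε by ring,
      Real.sqrt_mul (by positivity), Real.sqrt_sq (by positivity)]
  have h3 : -(π:ℂ) * I * ((((2*(m:ℝ)*r*ε : ℝ)) : ℂ) * I)^2 / ((((4*(m:ℝ)^2*ε : ℝ)) : ℂ) * I)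
      = (π:ℂ) * (r:ℂ)^2 * (ε:ℂ) := by
    rw [div_eq_iff hσ₀ne,
      show -(π:ℂ)*I*((((2*(m:ℝ)*r*ε : ℝ)):ℂ)*I)^2
        = -(π:ℂ)*(((2*(m:ℝ)*r*ε : ℝ)):ℂ)^2*(I*I)*I by ring,
      Complex.I_mul_I]
    push_cast
    ring
  have h5 : -1 / ((((4*(m:ℝ)^2*ε : ℝ)) : ℂ) * I) = ρf m ε := by
    rw [ρf, div_eq_iff hσ₀ne]
    have h4e : (4*(m:ℝ)^2*ε) ≠ 0 := by positivity
    rw [show ((((4*(m:ℝ)^2*ε)⁻¹ : ℝ) : ℂ) * I * ((((4*(m:ℝ)^2*ε : ℝ)) : ℂ) * I)) =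
      (((4*(m:ℝ)^2*ε)⁻¹ * (4*(m:ℝ)^2*ε) : ℝ) : ℂ) * (I*I) by push_cast; ring,
      inv_mul_cancel₀ h4e, Complex.I_mul_I]
    norm_num
  have h4 : ((((2*(m:ℝ)*r*ε : ℝ)) : ℂ) * I) / ((((4*(m:ℝ)^2*ε : ℝ)) : ℂ) * I)
      = (r:ℂ)/(2*(m:ℂ)) := by
    rw [div_eq_div_iff hσ₀ne (mul_ne_zero two_ne_zero hm')]
    push_cast
    ring
  rw [h2, h3, h4, h5, one_div]
  have key : cexp (-(π:ℂ) * (r:ℂ)^2 * (ε:ℂ)) * cexp ((π:ℂ) * (r:ℂ)^2 * (ε:ℂ)) = 1 := by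
    rw [← Complex.exp_add, show (-(π:ℂ) * (r:ℂ)^2 * (ε:ℂ) + (π:ℂ) * (r:ℂ)^2 * (ε:ℂ)) = 0 by ring,
      Complex.exp_zero]
  linear_combination (cexp (π * I * (r:ℂ)^2 / (2*(m:ℂ))) * ((2*(m:ℝ)*Real.sqrt ε : ℝ) : ℂ)⁻¹ *
    jacobiTheta₂ ((r:ℂ)/(2*(m:ℂ))) (ρf m ε)) * key

include hm hε in
lemma partA : (Real.sqrt ε : ℂ) * jacobiTheta₂ 0 (τf m ε) =
    ∑ r ∈ Finset.range (2*m), cexp (π * I * (r:ℂ)^2 / (2*(m:ℂ))) * (2*(m:ℂ))⁻¹ *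
      jacobiTheta₂ ((r:ℂ)/(2*(m:ℂ))) (ρf m ε) := by
  have hτim : 0 < (τf m ε).im := by rw [τf_im]; exact hε
  have : NeZero (2*m) := ⟨by omega⟩
  set f : ℤ → ℂ := fun n ↦ cexp (π * I * (n:ℂ)^2 * τf m ε) with hf
  have hθ : jacobiTheta₂ 0 (τf m ε) = ∑' n : ℤ, f n :=
    tsum_congr fun n ↦ by simp [jacobiTheta₂_term, hf]
  have hsum : Summable f :=
    ((summable_jacobiTheta₂_term_iff 0 (τf m ε)).mpr hτim).congr fun n ↦ by
      simp [jacobiTheta₂_term, hf]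
  let e : Fin (2*m) × ℤ ≃ ℤ := (Equiv.prodComm (Fin (2*m)) ℤ).trans (Int.divModEquiv (2*m)).symm
  have he : ∀ p : Fin (2*m) × ℤ, e p = p.2 * (2*m : ℕ) + ((p.1 : ℕ) : ℤ) := fun p ↦ by
    simp [e, Int.divModEquiv]
  have hinj : ∀ r : ℕ, Function.Injective (fun q : ℤ ↦ q * ((2*m : ℕ) : ℤ) + ((r:ℕ) : ℤ)) := by
    intro r a b hab
    simp only [add_left_inj] at hab
    exact mul_right_cancel₀ (by exact_mod_cast (by omega : (2*m : ℤ) ≠ 0)) hab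
  have hsum2 : Summable (fun p : Fin (2*m) × ℤ ↦ f (p.2 * (2*m : ℕ) + ((p.1 : ℕ) : ℤ))) := by
    refine (e.summable_iff.mpr hsum).congr fun p ↦ ?_
    rw [Function.comp_apply, he]
  have hre : ∑' n : ℤ, f n = ∑' p : Fin (2*m) × ℤ, f (p.2 * (2*m:ℕ) + ((p.1 : ℕ) : ℤ)) := by
    rw [← e.tsum_eq f]
    exact tsum_congr fun p ↦ by rw [he]
  have hprod : ∑' p : Fin (2*m) × ℤ, f (p.2 * (2*m:ℕ) + ((p.1:ℕ):ℤ)) =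
      ∑ r ∈ Finset.range (2*m), ∑' q : ℤ, f (q * (2*m:ℕ) + ((r:ℕ):ℤ)) := by
    rw [Summable.tsum_prod' hsum2 (fun r ↦ hsum.comp_injective (hinj r)), tsum_fintype,
      ← Fin.sum_univ_eq_sum_range (fun r : ℕ ↦ ∑' q : ℤ, f (q * (2*m:ℕ) + ((r:ℕ):ℤ)))]
  rw [hθ, hre, hprod, Finset.mul_sum]
  refine Finset.sum_congr rfl fun r hr ↦ ?_
  have hfq : ∀ q : ℤ, f (q * (2*m:ℕ) + ((r:ℕ):ℤ)) =
      cexp (π * I * ((q * (2*m : ℕ) + r : ℤ) : ℂ)^2 * τf m ε) := fun q ↦ by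
    rw [hf]
  rw [tsum_congr hfq, fiber_eq hm hε r]
  have hs : (Real.sqrt ε : ℂ) * ((2*(m:ℝ)*Real.sqrt ε : ℝ) : ℂ)⁻¹ = (2*(m:ℂ))⁻¹ := by
    have hsne : Real.sqrt ε ≠ 0 := by positivity
    have hsne' : (Real.sqrt ε : ℂ) ≠ 0 := Complex.ofReal_ne_zero.mpr hsne
    have hcast : ((2*(m:ℝ)*Real.sqrt ε : ℝ) : ℂ) = (2*(m:ℂ)) * (Real.sqrt ε : ℂ) := by
      push_cast; ring
    calc (Real.sqrt ε : ℂ) * ((2*(m:ℝ)*Real.sqrt ε : ℝ) : ℂ)⁻¹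
        = (Real.sqrt ε : ℂ) * ((2*(m:ℂ))⁻¹ * ((Real.sqrt ε : ℂ))⁻¹) := by rw [hcast, mul_inv]
    _ = (2*(m:ℂ))⁻¹ * ((Real.sqrt ε : ℂ) * ((Real.sqrt ε : ℂ))⁻¹) := by ring
    _ = (2*(m:ℂ))⁻¹ := by rw [mul_inv_cancel₀ hsne', mul_one]
  calc (Real.sqrt ε : ℂ) * (cexp (π * I * (r:ℂ)^2 / (2*(m:ℂ))) * ((2*(m:ℝ)*Real.sqrt ε : ℝ) : ℂ)⁻¹ *
      jacobiTheta₂ ((r:ℂ)/(2*(m:ℂ))) (ρf m ε))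
      = ((Real.sqrt ε : ℂ) * ((2*(m:ℝ)*Real.sqrt ε : ℝ) : ℂ)⁻¹) *
        (cexp (π * I * (r:ℂ)^2 / (2*(m:ℂ))) * jacobiTheta₂ ((r:ℂ)/(2*(m:ℂ))) (ρf m ε)) := by ring
  _ = _ := by rw [hs]; ring
end partA

lemma theta_period (z τ : ℂ) (j : ℕ) : jacobiTheta₂ z (τ + 2*(j:ℂ)) = jacobiTheta₂ z τ := by
  induction j with
  | zero => simp
  | succ n ih =>
      rw [show (τ + 2*((n+1 : ℕ):ℂ)) = (τ + 2*(n:ℂ)) + 2 by push_cast; ring,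
        jacobiTheta₂_add_right, ih]

section partB
variable {m : ℕ} (hm : 0 < m) {ε : ℝ} (hε : 0 < ε)

include hm hε in
lemma partB : (Real.sqrt ε : ℂ) * jacobiTheta₂ 0 (τf m ε) =
    ((-I * τf m ε) ^ (1/2:ℂ))⁻¹ * (((2*(m:ℂ)) / τf m ε) ^ (1/2:ℂ))⁻¹ *
      jacobiTheta₂ 0 (((-(2*(m:ℝ))⁻¹ : ℝ) : ℂ) + ρf m ε) := by
  have hτne : τf m ε ≠ 0 := by
    intro h
    have h2 := congrArg Complex.im h
    rw [τf_im] at h2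
    simp only [Complex.zero_im] at h2
    exact hε.ne' h2
  have hm' : ((m:ℂ)) ≠ 0 := Nat.cast_ne_zero.mpr hm.ne'
  have h2m : (2*(m:ℂ)) ≠ 0 := mul_ne_zero two_ne_zero hm'
  have hw : (2*(m:ℂ)) / τf m ε ≠ 0 := div_ne_zero h2m hτne
  have hεC : ((ε:ℂ)) ≠ 0 := Complex.ofReal_ne_zero.mpr hε.ne'
  have hsne' : (Real.sqrt ε : ℂ) ≠ 0 :=
    Complex.ofReal_ne_zero.mpr (by positivity)
  have hστ : (-1/τf m ε + 2*(m:ℂ)) * τf m ε = 2*(m:ℂ)*(ε:ℂ)*I := by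
    rw [add_mul, neg_div, neg_mul, div_mul_cancel₀ _ hτne, τf]
    push_cast
    field_simp
    ring
  have hσ : -1/τf m ε + 2*(m:ℂ) = 2*(m:ℂ)*(ε:ℂ)*I / τf m ε := by
    rw [eq_div_iff hτne, hστ]
  have hσne : -1/τf m ε + 2*(m:ℂ) ≠ 0 := by
    rw [hσ]
    exact div_ne_zero (by exact mul_ne_zero (mul_ne_zero h2m hεC) Complex.I_ne_zero) hτne
  rw [jacobiTheta₂_functional_equation 0 (τf m ε)]
  simp only [zero_div, ne_eq, OfNat.ofNat_ne_zero, not_false_eq_true, zero_pow, mul_zero,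
    Complex.exp_zero, mul_one]
  rw [show jacobiTheta₂ 0 (-1/τf m ε) = jacobiTheta₂ 0 (-1/τf m ε + 2*(m:ℂ)) from
      (theta_period _ _ m).symm,
    jacobiTheta₂_functional_equation 0 (-1/τf m ε + 2*(m:ℂ))]
  simp only [zero_div, ne_eq, OfNat.ofNat_ne_zero, not_false_eq_true, zero_pow, mul_zero,
    Complex.exp_zero, mul_one]
  have hiσ : -I * (-1/τf m ε + 2*(m:ℂ)) = (ε:ℂ) * ((2*(m:ℂ))/τf m ε) := by
    rw [hσ, show -I * (2*(m:ℂ)*(ε:ℂ)*I/τf m ε) = -(I*I) * (2*(m:ℂ)*(ε:ℂ))/τf m ε by ring,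
      Complex.I_mul_I]
    ring
  have hcpow : (-I * (-1/τf m ε + 2*(m:ℂ)))^(1/2:ℂ)
      = (Real.sqrt ε : ℂ) * (((2*(m:ℂ))/τf m ε)^(1/2:ℂ)) := by
    rw [hiσ, cpow_half_mul hε hw]
  have hAne : 2*(m:ℂ)*(ε:ℂ)*I ≠ 0 :=
    mul_ne_zero (mul_ne_zero h2m hεC) Complex.I_ne_zero
  have hnum : (((-(2*(m:ℝ))⁻¹ : ℝ) : ℂ) + ρf m ε) * (2*(m:ℂ)*(ε:ℂ)*I) = -τf m ε := by
    rw [ρf, τf]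
    push_cast
    field_simp
    ring_nf
    simp only [Complex.I_sq]
    field_simp
    ring
  have hρ' : -1/(-1/τf m ε + 2*(m:ℂ)) = ((-(2*(m:ℝ))⁻¹ : ℝ) : ℂ) + ρf m ε := by
    rw [hσ, div_div_eq_mul_div, eq_comm, eq_div_iff hAne, hnum]
    ring
  have hA : ((-I * τf m ε) ^ (1/2:ℂ)) ≠ 0 := by
    rw [Ne, Complex.cpow_eq_zero_iff]
    exact fun h ↦ (mul_ne_zero (neg_ne_zero.mpr Complex.I_ne_zero) hτne) h.1
  have hB : (((2*(m:ℂ))/τf m ε) ^ (1/2:ℂ)) ≠ 0 := by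
    rw [Ne, Complex.cpow_eq_zero_iff]
    exact fun h ↦ hw h.1
  rw [hcpow, hρ']
  field_simp
end partB
lemma gauss_sum (m : ℕ) (hm : 0 < m) :
    ∑ r ∈ Finset.range (2*m), cexp (π * I * (r:ℂ)^2 / (2*(m:ℂ))) = (1 + I) * (Real.sqrt m : ℂ) := by
  have hm' : ((m:ℂ)) ≠ 0 := Nat.cast_ne_zero.mpr hm.ne'
  have h2m : (2*(m:ℂ)) ≠ 0 := mul_ne_zero two_ne_zero hm'
  have hmR0 : (0:ℝ) < (m:ℝ) := by exact_mod_cast hm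
  have hεev : ∀ᶠ ε in 𝓝[>] (0:ℝ), 0 < ε := by
    filter_upwards [self_mem_nhdsWithin] with ε hε
    exact hε
  have hm2R : (0:ℝ) < 4*(m:ℝ)^2 := by nlinarith [hmR0]
  have him : Tendsto (fun ε : ℝ ↦ (4*(m:ℝ)^2*ε)⁻¹) (𝓝[>](0:ℝ)) atTop := by
    apply tendsto_inv_nhdsGT_zero.comp
    rw [tendsto_nhdsWithin_iff]
    constructor
    · have h0 : Tendsto (fun ε : ℝ ↦ 4*(m:ℝ)^2*ε) (𝓝 (0:ℝ)) (𝓝 (4*(m:ℝ)^2*0)) :=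
        (continuous_const.mul continuous_id).tendsto 0
      rw [mul_zero] at h0
      exact h0.mono_left nhdsWithin_le_nhds
    · filter_upwards [self_mem_nhdsWithin] with ε hε
      exact Set.mem_Ioi.mpr (mul_pos hm2R hε)
  -- Part A limit
  have hA : Tendsto (fun ε : ℝ ↦ (Real.sqrt ε : ℂ) * jacobiTheta₂ 0 (τf m ε)) (𝓝[>](0:ℝ))
      (𝓝 ((∑ r ∈ Finset.range (2*m), cexp (π * I * (r:ℂ)^2 / (2*(m:ℂ)))) * (2*(m:ℂ))⁻¹)) := by
    have hterm : ∀ r ∈ Finset.range (2*m), Tendsto (fun ε : ℝ ↦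
        cexp (π * I * (r:ℂ)^2 / (2*(m:ℂ))) * (2*(m:ℂ))⁻¹ *
          jacobiTheta₂ ((r:ℂ)/(2*(m:ℂ))) (ρf m ε)) (𝓝[>](0:ℝ))
        (𝓝 (cexp (π * I * (r:ℂ)^2 / (2*(m:ℂ))) * (2*(m:ℂ))⁻¹ * 1)) := by
      intro r _
      refine tendsto_const_nhds.mul ?_
      refine theta_tendsto_one (fun _ ↦ (r:ℂ)/(2*(m:ℂ))) (fun ε ↦ ρf m ε) (fun _ ↦ ?_) ?_
      · have : ((r:ℂ)/(2*(m:ℂ))).im = 0 := by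
          rw [show (2*(m:ℂ)) = ((2*(m:ℝ) : ℝ) : ℂ) by push_cast; ring,
            show ((r:ℂ)) = ((r : ℝ) : ℂ) by push_cast; ring, ← Complex.ofReal_div]
          exact Complex.ofReal_im _
        exact this
      · simpa only [ρf_im] using him
    have hsum := tendsto_finset_sum (Finset.range (2*m)) hterm
    have heq : (∑ r ∈ Finset.range (2*m), cexp (π * I * (r:ℂ)^2 / (2*(m:ℂ))) * (2*(m:ℂ))⁻¹ * 1)
        = (∑ r ∈ Finset.range (2*m), cexp (π * I * (r:ℂ)^2 / (2*(m:ℂ)))) * (2*(m:ℂ))⁻¹ := by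
      rw [Finset.sum_mul]
      exact Finset.sum_congr rfl fun r _ ↦ by ring
    rw [heq] at hsum
    refine hsum.congr' ?_
    filter_upwards [hεev] with ε hε
    exact (partA hm hε).symm
  -- Part B limit
  have hτ0ne : ((((2*(m:ℝ))⁻¹ : ℝ)) : ℂ) ≠ 0 := by
    rw [Complex.ofReal_ne_zero]
    positivity
  have hτcont : Tendsto (fun ε : ℝ ↦ τf m ε) (𝓝[>](0:ℝ)) (𝓝 ((((2*(m:ℝ))⁻¹ : ℝ)) : ℂ)) := by
    have hc : Continuous (fun ε : ℝ ↦ τf m ε) := by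
      unfold τf
      exact continuous_const.add (Complex.continuous_ofReal.mul continuous_const)
    have h0 := hc.tendsto 0
    rw [show τf m 0 = (((2*(m:ℝ))⁻¹ : ℝ) : ℂ) by simp [τf]] at h0
    exact h0.mono_left nhdsWithin_le_nhds
  have hvAne0 : -I * ((((2*(m:ℝ))⁻¹ : ℝ)) : ℂ) ≠ 0 :=
    mul_ne_zero (neg_ne_zero.mpr Complex.I_ne_zero) hτ0ne
  have hvAmem : -I * ((((2*(m:ℝ))⁻¹ : ℝ)) : ℂ) ∈ Complex.slitPlane := by
    rw [Complex.mem_slitPlane_iff]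
    right
    have h1 : (-I * ((((2*(m:ℝ))⁻¹ : ℝ)) : ℂ)).im = -(2*(m:ℝ))⁻¹ := by
      simp [Complex.mul_im]
    rw [h1]
    have : (0:ℝ) < (2*(m:ℝ))⁻¹ := inv_pos.mpr (by linarith [hmR0])
    linarith
  have hcpowA : Tendsto (fun ε : ℝ ↦ (-I * τf m ε) ^ (1/2:ℂ)) (𝓝[>](0:ℝ))
      (𝓝 ((-I * ((((2*(m:ℝ))⁻¹ : ℝ)) : ℂ)) ^ (1/2:ℂ))) :=
    (continuousAt_cpow_const hvAmem).tendsto.comp (tendsto_const_nhds.mul hτcont)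
  have hval : (2*(m:ℂ)) / ((((2*(m:ℝ))⁻¹ : ℝ)) : ℂ) = ((((2*(m:ℝ))^2 : ℝ)) : ℂ) := by
    push_cast
    field_simp
  have hdiv : Tendsto (fun ε : ℝ ↦ (2*(m:ℂ)) / τf m ε) (𝓝[>](0:ℝ))
      (𝓝 ((((2*(m:ℝ))^2 : ℝ)) : ℂ)) := by
    rw [← hval]
    exact tendsto_const_nhds.div hτcont hτ0ne
  have hsqmem : ((((2*(m:ℝ))^2 : ℝ)) : ℂ) ∈ Complex.slitPlane := by
    rw [Complex.mem_slitPlane_iff]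
    left
    rw [Complex.ofReal_re]
    positivity
  have hcpowB : Tendsto (fun ε : ℝ ↦ ((2*(m:ℂ)) / τf m ε) ^ (1/2:ℂ)) (𝓝[>](0:ℝ))
      (𝓝 (((((2*(m:ℝ))^2 : ℝ)) : ℂ) ^ (1/2:ℂ))) :=
    (continuousAt_cpow_const hsqmem).tendsto.comp hdiv
  have hval2 : ((((2*(m:ℝ))^2 : ℝ)) : ℂ) ^ (1/2:ℂ) = (((2*(m:ℝ)) : ℝ) : ℂ) := by
    rw [show (1/2:ℂ) = (((1/2:ℝ)) : ℂ) by norm_num,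
      ← Complex.ofReal_cpow (by positivity) (1/2 : ℝ), ← Real.sqrt_eq_rpow,
      Real.sqrt_sq (by positivity)]
  have hθB : Tendsto (fun ε : ℝ ↦ jacobiTheta₂ 0 (((-(2*(m:ℝ))⁻¹ : ℝ) : ℂ) + ρf m ε))
      (𝓝[>](0:ℝ)) (𝓝 1) := by
    refine theta_tendsto_one (fun _ ↦ 0) _ (fun _ ↦ Complex.zero_im) ?_
    have : ∀ ε : ℝ, ((((-(2*(m:ℝ))⁻¹ : ℝ) : ℂ) + ρf m ε)).im = (4*(m:ℝ)^2*ε)⁻¹ := by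
      intro ε
      rw [Complex.add_im, Complex.ofReal_im, ρf_im, zero_add]
    simpa only [this] using him
  have hvA12ne : ((-I * ((((2*(m:ℝ))⁻¹ : ℝ)) : ℂ)) ^ (1/2:ℂ)) ≠ 0 := by
    rw [Ne, Complex.cpow_eq_zero_iff]
    exact fun h ↦ hvAne0 h.1
  have h2mne : ((((2*(m:ℝ))^2 : ℝ)) : ℂ) ^ (1/2:ℂ) ≠ 0 := by
    rw [hval2, Complex.ofReal_ne_zero]
    positivity
  have hB : Tendsto (fun ε : ℝ ↦ (Real.sqrt ε : ℂ) * jacobiTheta₂ 0 (τf m ε)) (𝓝[>](0:ℝ))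
      (𝓝 ((((-I * ((((2*(m:ℝ))⁻¹ : ℝ)) : ℂ)) ^ (1/2:ℂ))⁻¹ *
        ((((((2*(m:ℝ))^2 : ℝ)) : ℂ) ^ (1/2:ℂ))⁻¹) * 1))) := by
    have := ((hcpowA.inv₀ hvA12ne).mul (hcpowB.inv₀ h2mne)).mul hθB
    refine this.congr' ?_
    filter_upwards [hεev] with ε hε
    exact (partB hm hε).symm
  -- combine
  have huniq := tendsto_nhds_unique hA hB
  rw [hval2, mul_one] at huniq
  -- cancel (2m)⁻¹
  have hcast : (((2*(m:ℝ)) : ℝ) : ℂ) = 2*(m:ℂ) := by push_cast; ring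
  rw [hcast] at huniq
  have hG : (∑ r ∈ Finset.range (2*m), cexp (π * I * (r:ℂ)^2 / (2*(m:ℂ))))
      = ((-I * ((((2*(m:ℝ))⁻¹ : ℝ)) : ℂ)) ^ (1/2:ℂ))⁻¹ :=
    mul_right_cancel₀ (inv_ne_zero h2m) huniq
  rw [hG]
  -- evaluate the cpow
  have hd0 : (0:ℝ) < 2*Real.sqrt m := by positivity
  have hdC : ((2*Real.sqrt m : ℝ) : ℂ) ≠ 0 := Complex.ofReal_ne_zero.mpr hd0.ne'
  set x : ℂ := (1 - I) * (((2*Real.sqrt m : ℝ)) : ℂ)⁻¹ with hxdef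
  have hsm : ((Real.sqrt m : ℂ))^2 = (m:ℂ) := by
    rw [← Complex.ofReal_pow, Real.sq_sqrt (Nat.cast_nonneg m)]
    norm_cast
  have hx2 : x^2 = -I * ((((2*(m:ℝ))⁻¹ : ℝ)) : ℂ) := by
    rw [hxdef]
    rw [show ((1 - I) * (((2*Real.sqrt m : ℝ)) : ℂ)⁻¹)^2
      = (1-I)^2 * ((((2*Real.sqrt m : ℝ)) : ℂ)^2)⁻¹ by rw [mul_pow, inv_pow]]
    rw [show ((1:ℂ)-I)^2 = -2*I by rw [sub_sq]; rw [Complex.I_sq]; ring]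
    rw [show (((2*Real.sqrt m : ℝ)) : ℂ)^2 = 4*(m:ℂ) by
      rw [show ((2*Real.sqrt m : ℝ) : ℂ) = 2*((Real.sqrt m : ℝ) : ℂ) by push_cast; ring,
        mul_pow, hsm]
      ring]
    push_cast
    field_simp
    ring
  have hxre : 0 < x.re := by
    have hre : x.re = (2*Real.sqrt m : ℝ)⁻¹ := by
      rw [hxdef, ← Complex.ofReal_inv, Complex.mul_re, Complex.ofReal_re, Complex.ofReal_im]
      simp
    rw [hre]
    exact inv_pos.mpr hd0
  have harg := Complex.abs_arg_lt_pi_div_two_iff.mpr (Or.inl hxre)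
  rw [abs_lt] at harg
  have hvAx : (-I * ((((2*(m:ℝ))⁻¹ : ℝ)) : ℂ)) ^ (1/2:ℂ) = x := by
    rw [← hx2, one_div]
    exact Complex.pow_cpow_ofNat_inv harg.1 harg.2.le
  rw [hvAx, hxdef, mul_inv, inv_inv]
  have h1I : ((1:ℂ) - Complex.I)⁻¹ = (1+Complex.I)/2 := by
    have hmul : ((1:ℂ) - Complex.I) * ((1+Complex.I)/2) = 1 := by
      have h2 : ((1:ℂ) - Complex.I) * ((1+Complex.I)/2) = (1 - Complex.I^2)/2 := by ring
      rw [h2, Complex.I_sq]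
      norm_num
    exact inv_eq_of_mul_eq_one_right hmul
  rw [h1I]
  push_cast
  ring
theorem quadratic_sine_sum (k : ℕ) (hk : 0 < k) :
    ∑ n ∈ Finset.Icc 0 k, Real.sin (π * (n : ℝ) ^ 2 / k) =
      Real.sqrt (2 * (k : ℝ)) * (1 + (-1 : ℝ) ^ k) / 4 := by
  have hIcc : Finset.Icc 0 k = Finset.range (k+1) := by
    ext n
    simp [Nat.lt_succ_iff]
  have hkR : ((k:ℝ)) ≠ 0 := Nat.cast_ne_zero.mpr hk.ne'
  rcases Nat.even_or_odd k with hev | hodd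
  · -- even case
    obtain ⟨m, hm2⟩ := hev
    have hk2 : k = 2*m := by omega
    have hm : 0 < m := by omega
    have hmR0 : (0:ℝ) < (m:ℝ) := by exact_mod_cast hm
    -- RHS = sqrt m
    have hRHS : Real.sqrt (2 * (k:ℝ)) * (1 + (-1:ℝ)^k) / 4 = Real.sqrt m := by
      rw [hk2]
      rw [Even.neg_one_pow ⟨m, by omega⟩]
      push_cast
      rw [show (2:ℝ) * (2*(m:ℝ)) = 2^2 * m by ring, Real.sqrt_mul (by positivity),
        Real.sqrt_sq (by norm_num)]
      ring
    rw [hRHS, hIcc, Finset.sum_range_succ]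
    have hlast : Real.sin (π * (k:ℝ)^2 / k) = 0 := by
      rw [show π * (k:ℝ)^2 / k = k * π by field_simp]
      exact Real.sin_nat_mul_pi k
    rw [hlast, add_zero]
    have hterm : ∀ r : ℕ, Real.sin (π * (r:ℝ)^2 / k)
        = (cexp (π * I * (r:ℂ)^2 / (2*(m:ℂ)))).im := by
      intro r
      rw [show (π * I * (r:ℂ)^2 / (2*(m:ℂ))) = (((π * (r:ℝ)^2 / k : ℝ)) : ℂ) * I by
        rw [hk2]; push_cast; ring]
      rw [Complex.exp_ofReal_mul_I_im]
    calc ∑ r ∈ Finset.range k, Real.sin (π * (r:ℝ)^2 / k)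
        = ∑ r ∈ Finset.range (2*m), (cexp (π * I * (r:ℂ)^2 / (2*(m:ℂ)))).im := by
          rw [← hk2]
          exact Finset.sum_congr rfl fun r _ ↦ hterm r
    _ = (∑ r ∈ Finset.range (2*m), cexp (π * I * (r:ℂ)^2 / (2*(m:ℂ)))).im := by
          rw [Complex.im_sum]
    _ = ((1 + Complex.I) * (Real.sqrt m : ℂ)).im := by rw [gauss_sum m hm]
    _ = Real.sqrt m := by
          simp [Complex.add_im, Complex.mul_im]
  · -- odd case
    have ho : (1:ℝ) + (-1:ℝ)^k = 0 := by
      rw [Odd.neg_one_pow hodd]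
      ring
    rw [ho, mul_zero, zero_div]
    -- reflection
    set f : ℕ → ℝ := fun n ↦ Real.sin (π * (n:ℝ)^2 / k) with hf
    have hrefl : ∀ n ∈ Finset.range (k+1), f (k - n) = - f n := by
      intro n hn
      have hnk : n ≤ k := Nat.lt_succ_iff.mp (Finset.mem_range.mp hn)
      have hcast : ((k - n : ℕ) : ℝ) = (k:ℝ) - (n:ℝ) := by
        exact Nat.cast_sub hnk
      have harg : π * ((k - n : ℕ) : ℝ)^2 / k
          = π * (n:ℝ)^2 / k + ((((k : ℤ) - 2*(n:ℤ)) : ℤ) : ℝ) * π := by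
        rw [hcast]
        push_cast
        field_simp
        ring
      rw [hf]
      simp only
      rw [harg, Real.sin_add_int_mul_pi, Odd.neg_one_zpow (by
        refine Odd.sub_even ?_ ?_
        · exact_mod_cast hodd
        · exact ⟨(n:ℤ), by ring⟩)]
      ring
    have hS : ∑ n ∈ Finset.range (k+1), f n = - ∑ n ∈ Finset.range (k+1), f n := by
      calc ∑ n ∈ Finset.range (k+1), f n = ∑ n ∈ Finset.range (k+1), f (k + 1 - 1 - n) :=
            (Finset.sum_range_reflect f (k+1)).symm
      _ = ∑ n ∈ Finset.range (k+1), f (k - n) := by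
            exact Finset.sum_congr rfl fun n _ ↦ by norm_num
      _ = ∑ n ∈ Finset.range (k+1), (- f n) := Finset.sum_congr rfl hrefl
      _ = - ∑ n ∈ Finset.range (k+1), f n := by rw [Finset.sum_neg_distrib]
    rw [hIcc]
    have : ∑ n ∈ Finset.range (k+1), f n = 0 := by linarith [hS]
    exact this
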